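/- Let θ be a nonnegative measure on Ω = [0,1] with total mass at most 2, let U : Ω → ℝ be continuous with 0 ≤ U ≤ Ū, let m > 0 and δ > 4Ū/m. Then there exists a unique continuous function Ψ : Ω → ℝ with 0 ≤ Ψ ≤ Ū satisfying Ψ(x) = U(x) + (1/(2mδ))·∫_Ω (max(Ψ(z) - Ψ(x), 0))^2 θ(dz) for all x ∈ Ω. -/

import Mathlib

open MeasureTheory

namespace HJBAux

noncomputable section

variable (θ : Measure (Set.Icc (0:ℝ) 1)) [IsFiniteMeasure θ]

/-- clamp to [0, Ub] -/
def projI (Ub t : ℝ) : ℝ := max (min t Ub) 0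

lemma projI_nonneg (Ub t : ℝ) : 0 ≤ projI Ub t := le_max_right _ _

lemma projI_le (Ub t : ℝ) (h : 0 ≤ Ub) : projI Ub t ≤ Ub := max_le (min_le_right _ _) h

lemma projI_lip (Ub t s : ℝ) : |projI Ub t - projI Ub s| ≤ |t - s| :=
  (abs_max_sub_max_le_abs _ _ _).trans <|
    (abs_min_sub_min_le_max t Ub s Ub).trans (by simp [abs_nonneg])

lemma projI_eq (Ub t : ℝ) (h0 : 0 ≤ t) (h1 : t ≤ Ub) : projI Ub t = t := by
  simp [projI, min_eq_left h1, max_eq_left h0]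

lemma ptwise (a b Ub D : ℝ) (h1 : max a 0 ≤ Ub) (h2 : max b 0 ≤ Ub)
    (h3 : |a - b| ≤ D) : |max a 0 ^ 2 - max b 0 ^ 2| ≤ 2 * Ub * D := by
  have hp : (0:ℝ) ≤ max a 0 := le_max_right _ _
  have hq : (0:ℝ) ≤ max b 0 := le_max_right _ _
  have hpq : |max a 0 - max b 0| ≤ |a - b| := abs_max_sub_max_le_abs _ _ _
  have habs : |a - b| ≥ 0 := abs_nonneg _
  have : |max a 0 ^ 2 - max b 0 ^ 2| = (max a 0 + max b 0) * |max a 0 - max b 0| := by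
    rw [← abs_of_nonneg (by positivity : (0:ℝ) ≤ max a 0 + max b 0), ← abs_mul]
    ring_nf
  rw [this]
  have h2Ub : max a 0 + max b 0 ≤ 2 * Ub := by linarith
  calc (max a 0 + max b 0) * |max a 0 - max b 0| ≤ (2 * Ub) * |a - b| := by
        apply mul_le_mul h2Ub hpq (abs_nonneg _) (by linarith)
    _ ≤ 2 * Ub * D := by nlinarith

lemma integrable_cont (F : Set.Icc (0:ℝ) 1 → ℝ) (hF : Continuous F) : Integrable F θ := by
  obtain ⟨C, hC⟩ : ∃ C, ∀ z, ‖F z‖ ≤ C := by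
    obtain ⟨C, hC⟩ := (isCompact_univ.image hF).isBounded.subset_closedBall 0
    exact ⟨C, fun z => by
      have := hC ⟨z, trivial, rfl⟩
      simpa [Metric.mem_closedBall, Real.dist_eq] using this⟩
  exact (integrable_const C).mono' hF.aestronglyMeasurable (ae_of_all _ hC)

lemma int_upper (F : Set.Icc (0:ℝ) 1 → ℝ) (hF : Continuous F) (C : ℝ)
    (hC : ∀ z, F z ≤ C) : ∫ z, F z ∂θ ≤ C * (θ Set.univ).toReal := by
  calc ∫ z, F z ∂θ ≤ ∫ _z, C ∂θ :=
        integral_mono (integrable_cont θ F hF) (integrable_const C) hC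
    _ = (θ Set.univ).toReal • C := by rw [integral_const]; rfl
    _ = C * (θ Set.univ).toReal := by rw [smul_eq_mul]; ring

lemma int_est (F G : Set.Icc (0:ℝ) 1 → ℝ) (hF : Continuous F) (hG : Continuous G)
    (Ub D : ℝ) (h1 : ∀ z, max (F z) 0 ≤ Ub) (h2 : ∀ z, max (G z) 0 ≤ Ub)
    (h3 : ∀ z, |F z - G z| ≤ D) :
    |∫ z, max (F z) 0 ^ 2 ∂θ - ∫ z, max (G z) 0 ^ 2 ∂θ| ≤
      2 * Ub * D * (θ Set.univ).toReal := by
  have hFi : Integrable (fun z => max (F z) 0 ^ 2) θ :=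
    integrable_cont θ _ ((hF.max continuous_const).pow 2)
  have hGi : Integrable (fun z => max (G z) 0 ^ 2) θ :=
    integrable_cont θ _ ((hG.max continuous_const).pow 2)
  rw [← integral_sub hFi hGi]
  calc |∫ z, (max (F z) 0 ^ 2 - max (G z) 0 ^ 2) ∂θ|
      ≤ ∫ z, |max (F z) 0 ^ 2 - max (G z) 0 ^ 2| ∂θ := by
        simpa [Real.norm_eq_abs] using norm_integral_le_integral_norm
          (fun z => max (F z) 0 ^ 2 - max (G z) 0 ^ 2) (μ := θ)
    _ ≤ 2 * Ub * D * (θ Set.univ).toReal := by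
        apply int_upper θ _ ((((hF.max continuous_const).pow 2).sub ((hG.max continuous_const).pow 2)).abs)
        exact fun z => ptwise _ _ _ _ (h1 z) (h2 z) (h3 z)


lemma projI_cont (Ub : ℝ) : Continuous (projI Ub) :=
  (continuous_id.min continuous_const).max continuous_const

lemma lipG (f : C(Set.Icc (0:ℝ) 1, ℝ)) (Ub : ℝ) (hUb : 0 ≤ Ub) :
    Continuous fun t => ∫ z, max (projI Ub (f z) - projI Ub t) 0 ^ 2 ∂θ := by
  set L : ℝ := 2 * Ub * (θ Set.univ).toReal with hL
  have hL0 : 0 ≤ L := by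
    have := ENNReal.toReal_nonneg (a := θ Set.univ); positivity
  apply LipschitzWith.continuous (K := L.toNNReal)
  apply LipschitzWith.of_dist_le_mul
  intro t s
  rw [Real.dist_eq, Real.dist_eq, Real.coe_toNNReal _ hL0]
  have hcont : ∀ u : ℝ, Continuous fun z => projI Ub (f z) - projI Ub u :=
    fun u => ((projI_cont Ub).comp f.continuous).sub continuous_const
  have hb : ∀ u : ℝ, ∀ z : Set.Icc (0:ℝ) 1,
      max (projI Ub (f z) - projI Ub u) 0 ≤ Ub := by
    intro u z
    refine max_le ?_ hUb
    have h1 : projI Ub (f z) ≤ Ub := projI_le Ub (f z) hUb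
    have h2 : 0 ≤ projI Ub u := projI_nonneg Ub u
    linarith
  have hdiff : ∀ z : Set.Icc (0:ℝ) 1,
      |(projI Ub (f z) - projI Ub t) - (projI Ub (f z) - projI Ub s)| ≤ |t - s| := by
    intro z
    have : (projI Ub (f z) - projI Ub t) - (projI Ub (f z) - projI Ub s)
        = -(projI Ub t - projI Ub s) := by ring
    rw [this, abs_neg]
    exact projI_lip Ub t s
  have h := int_est θ (fun z => projI Ub (f z) - projI Ub t)
    (fun z => projI Ub (f z) - projI Ub s) (hcont t) (hcont s) Ub |t - s|
    (hb t) (hb s) hdiff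
  calc |(∫ z, max (projI Ub (f z) - projI Ub t) 0 ^ 2 ∂θ)
        - ∫ z, max (projI Ub (f z) - projI Ub s) 0 ^ 2 ∂θ|
      ≤ 2 * Ub * |t - s| * (θ Set.univ).toReal := h
    _ = L * |t - s| := by rw [hL]; ring

/-- The truncated HJB operator. -/
def Tmap (Uc : C(Set.Icc (0:ℝ) 1, ℝ)) (Ub c : ℝ) (hUb : 0 ≤ Ub)
    (f : C(Set.Icc (0:ℝ) 1, ℝ)) : C(Set.Icc (0:ℝ) 1, ℝ) :=
  ⟨fun x => min (Uc x + c * ∫ z, max (projI Ub (f z) - projI Ub (f x)) 0 ^ 2 ∂θ) Ub,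
    ((Uc.continuous.add (continuous_const.mul
      ((lipG θ f Ub hUb).comp f.continuous))).min continuous_const)⟩

lemma Tmap_apply (Uc : C(Set.Icc (0:ℝ) 1, ℝ)) (Ub c : ℝ) (hUb : 0 ≤ Ub)
    (f : C(Set.Icc (0:ℝ) 1, ℝ)) (x : Set.Icc (0:ℝ) 1) :
    Tmap θ Uc Ub c hUb f x
      = min (Uc x + c * ∫ z, max (projI Ub (f z) - projI Ub (f x)) 0 ^ 2 ∂θ) Ub := rfl

end
end HJBAux

open HJBAux in
theorem hjb_unique_solution
    (θ : Measure (Set.Icc (0:ℝ) 1)) [IsFiniteMeasure θ]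
    (hθ : θ Set.univ ≤ 2)
    (U : (Set.Icc (0:ℝ) 1) → ℝ) (hU : Continuous U)
    (Ubar m δ : ℝ) (hUbar : 0 < Ubar) (hm : 0 < m)
    (hδ : δ > 4 * Ubar / m)
    (hU0 : ∀ x, 0 ≤ U x) (hU1 : ∀ x, U x ≤ Ubar) :
    ∃! Ψ : C((Set.Icc (0:ℝ) 1), ℝ),
      (∀ x, 0 ≤ Ψ x ∧ Ψ x ≤ Ubar) ∧
      (∀ x, Ψ x = U x + (1 / (2 * m * δ)) * ∫ z, (max (Ψ z - Ψ x) 0) ^ 2 ∂θ) := by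
  classical
  set c : ℝ := 1 / (2 * m * δ) with hc_def
  have hUb0 : (0:ℝ) ≤ Ubar := hUbar.le
  have hδ0 : 0 < δ := lt_trans (by positivity) hδ
  have hmδ : 4 * Ubar < m * δ := by
    rw [gt_iff_lt, div_lt_iff₀ hm] at hδ; linarith
  have hmδ0 : 0 < m * δ := by positivity
  have hc : 0 < c := by rw [hc_def]; positivity
  have hθ2 : (θ Set.univ).toReal ≤ 2 := by
    have h := ENNReal.toReal_mono (by norm_num) hθ
    simpa using h
  have hT0 : 0 ≤ (θ Set.univ).toReal := ENNReal.toReal_nonneg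
  set K : ℝ := 4 * Ubar / (m * δ) with hK_def
  have hK0 : 0 ≤ K := by rw [hK_def]; positivity
  have hK1 : K < 1 := by rw [hK_def, div_lt_one hmδ0]; linarith
  have hcK : c * (8 * Ubar) = K := by rw [hc_def, hK_def]; field_simp; ring
  -- main estimate
  have hest : ∀ (f g : C(Set.Icc (0:ℝ) 1, ℝ)) (x : Set.Icc (0:ℝ) 1),
      (∀ z, 0 ≤ f z ∧ f z ≤ Ubar) → (∀ z, 0 ≤ g z ∧ g z ≤ Ubar) →
      |(U x + c * ∫ z, max (f z - f x) 0 ^ 2 ∂θ)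
        - (U x + c * ∫ z, max (g z - g x) 0 ^ 2 ∂θ)| ≤ K * dist f g := by
    intro f g x hf hg
    have h1 : ∀ z, max (f z - f x) 0 ≤ Ubar := fun z =>
      max_le (by linarith [(hf z).2, (hf x).1]) hUb0
    have h2 : ∀ z, max (g z - g x) 0 ≤ Ubar := fun z =>
      max_le (by linarith [(hg z).2, (hg x).1]) hUb0
    have h3 : ∀ z : Set.Icc (0:ℝ) 1,
        |(f z - f x) - (g z - g x)| ≤ 2 * dist f g := by
      intro z
      have e : (f z - f x) - (g z - g x) = (f z - g z) - (f x - g x) := by ring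
      rw [e]
      have ha : |f z - g z| ≤ dist f g := by
        rw [← Real.dist_eq]; exact ContinuousMap.dist_apply_le_dist z
      have hb : |f x - g x| ≤ dist f g := by
        rw [← Real.dist_eq]; exact ContinuousMap.dist_apply_le_dist x
      calc |(f z - g z) - (f x - g x)| ≤ |f z - g z| + |f x - g x| := abs_sub _ _
        _ ≤ 2 * dist f g := by linarith
    have h := int_est θ (fun z => f z - f x) (fun z => g z - g x)
      (f.continuous.sub continuous_const) (g.continuous.sub continuous_const)
      Ubar (2 * dist f g) h1 h2 h3
    have e : (U x + c * ∫ z, max (f z - f x) 0 ^ 2 ∂θ)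
        - (U x + c * ∫ z, max (g z - g x) 0 ^ 2 ∂θ)
        = c * ((∫ z, max (f z - f x) 0 ^ 2 ∂θ) - ∫ z, max (g z - g x) 0 ^ 2 ∂θ) := by
      ring
    rw [e, abs_mul, abs_of_pos hc]
    have hd0 : (0:ℝ) ≤ dist f g := dist_nonneg
    have hcKd : c * (8 * Ubar) * dist f g = K * dist f g := by rw [hcK]
    nlinarith [mul_le_mul_of_nonneg_left h hc.le,
      mul_nonneg (mul_nonneg (mul_nonneg hc.le hUb0) hd0) (sub_nonneg.2 hθ2), hcKd]
  -- the invariant set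
  set S : Set C(Set.Icc (0:ℝ) 1, ℝ) := {f | ∀ x, U x ≤ f x ∧ f x ≤ Ubar} with hS_def
  have hSclosed : IsClosed S := by
    have hS2 : S = ⋂ x, ((fun f : C(Set.Icc (0:ℝ) 1, ℝ) => f x) ⁻¹' Set.Icc (U x) Ubar) := by
      ext f
      simp [hS_def, Set.mem_iInter, Set.mem_Icc]
    rw [hS2]
    exact isClosed_iInter fun x =>
      IsClosed.preimage (continuous_eval_const x) isClosed_Icc
  haveI : Nonempty S := ⟨⟨⟨U, hU⟩, fun x => ⟨le_refl _, hU1 x⟩⟩⟩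
  haveI : CompleteSpace S := hSclosed.isComplete.completeSpace_coe
  -- the operator maps into S
  have hmem : ∀ f : C(Set.Icc (0:ℝ) 1, ℝ), Tmap θ ⟨U, hU⟩ Ubar c hUb0 f ∈ S := by
    intro f
    simp only [hS_def, Set.mem_setOf_eq]
    intro x
    have hint0 : 0 ≤ ∫ z, max (projI Ubar (f z) - projI Ubar (f x)) 0 ^ 2 ∂θ :=
      integral_nonneg fun z => by positivity
    rw [Tmap_apply]
    simp only [ContinuousMap.coe_mk]
    constructor
    · exact le_min (le_add_of_nonneg_right (mul_nonneg hc.le hint0)) (hU1 x)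
    · exact min_le_right _ _
  set Φ : S → S := fun f => ⟨Tmap θ ⟨U, hU⟩ Ubar c hUb0 f.1, hmem f.1⟩ with hΦ_def
  have hΦlip : ∀ f g : ↥S, dist (Φ f) (Φ g) ≤ K * dist f g := by
    intro f g
    have hfd : dist f g = dist f.1 g.1 := Subtype.dist_eq f g
    have hΦd : dist (Φ f) (Φ g) = dist (Φ f).1 (Φ g).1 := Subtype.dist_eq _ _
    rw [hfd, hΦd]
    rw [ContinuousMap.dist_le (mul_nonneg hK0 dist_nonneg)]
    intro x
    have hfb : ∀ z, 0 ≤ f.1 z ∧ f.1 z ≤ Ubar := fun z =>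
      ⟨(hU0 z).trans (f.2 z).1, (f.2 z).2⟩
    have hgb : ∀ z, 0 ≤ g.1 z ∧ g.1 z ≤ Ubar := fun z =>
      ⟨(hU0 z).trans (g.2 z).1, (g.2 z).2⟩
    have hpf : ∀ z, projI Ubar (f.1 z) = f.1 z := fun z =>
      projI_eq _ _ (hfb z).1 (hfb z).2
    have hpg : ∀ z, projI Ubar (g.1 z) = g.1 z := fun z =>
      projI_eq _ _ (hgb z).1 (hgb z).2
    simp only [hΦ_def]
    rw [Real.dist_eq]
    show |(Tmap θ ⟨U, hU⟩ Ubar c hUb0 f.1) x - (Tmap θ ⟨U, hU⟩ Ubar c hUb0 g.1) x| ≤ _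
    rw [Tmap_apply, Tmap_apply]
    simp only [ContinuousMap.coe_mk, hpf, hpg]
    refine le_trans ((abs_min_sub_min_le_max _ _ _ _).trans ?_) (hest f.1 g.1 x hfb hgb)
    simp
  have hcontr : ContractingWith K.toNNReal Φ := by
    constructor
    · have h1 : (K.toNNReal : ℝ) < 1 := by rw [Real.coe_toNNReal _ hK0]; exact hK1
      exact_mod_cast h1
    · refine LipschitzWith.of_dist_le_mul fun f g => ?_
      rw [Real.coe_toNNReal _ hK0]
      exact hΦlip f g
  have hp : Function.IsFixedPt Φ (ContractingWith.fixedPoint Φ hcontr) :=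
    hcontr.fixedPoint_isFixedPt
  set Ψc : C(Set.Icc (0:ℝ) 1, ℝ) := (ContractingWith.fixedPoint Φ hcontr).1 with hΨc_def
  have hmemΨ : ∀ x, U x ≤ Ψc x ∧ Ψc x ≤ Ubar := (ContractingWith.fixedPoint Φ hcontr).2
  have hfix : Tmap θ ⟨U, hU⟩ Ubar c hUb0 Ψc = Ψc := congrArg Subtype.val hp
  have hlow : ∀ x, U x ≤ Ψc x := fun x => (hmemΨ x).1
  have hub : ∀ x, Ψc x ≤ Ubar := fun x => (hmemΨ x).2
  have h0 : ∀ x, 0 ≤ Ψc x := fun x => (hU0 x).trans (hlow x)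
  have hproj : ∀ x, projI Ubar (Ψc x) = Ψc x := fun x => projI_eq _ _ (h0 x) (hub x)
  have hfixx : ∀ x, min (U x + c * ∫ z, max (Ψc z - Ψc x) 0 ^ 2 ∂θ) Ubar = Ψc x := by
    intro x
    have h := ContinuousMap.congr_fun hfix x
    rw [Tmap_apply] at h
    simp only [ContinuousMap.coe_mk, hproj] at h
    exact h
  haveI : Nonempty (Set.Icc (0:ℝ) 1) := ⟨⟨0, by constructor <;> norm_num⟩⟩
  obtain ⟨x₀, hx₀⟩ : ∃ x₀, ∀ z, Ψc z ≤ Ψc x₀ := by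
    obtain ⟨x₀, -, h⟩ :=
      isCompact_univ.exists_isMaxOn Set.univ_nonempty Ψc.continuous.continuousOn
    exact ⟨x₀, fun z => h (Set.mem_univ z)⟩
  have hI0 : (∫ z, max (Ψc z - Ψc x₀) 0 ^ 2 ∂θ) = 0 := by
    have hz : ∀ z, max (Ψc z - Ψc x₀) 0 ^ 2 = 0 := fun z => by
      rw [max_eq_right (sub_nonpos.2 (hx₀ z))]; norm_num
    calc (∫ z, max (Ψc z - Ψc x₀) 0 ^ 2 ∂θ) = ∫ _z, (0:ℝ) ∂θ :=
          integral_congr_ae (Filter.Eventually.of_forall hz)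
      _ = 0 := integral_zero _ _
  have h2cM : 2 * c * Ψc x₀ ≤ 1 := by
    have h1 : Ψc x₀ ≤ Ubar := hub x₀
    have h2 : Ψc x₀ ≤ m * δ := by linarith
    rw [hc_def]
    have e : 2 * (1 / (2 * m * δ)) * Ψc x₀ = Ψc x₀ / (m * δ) := by field_simp
    rw [e, div_le_one hmδ0]
    exact h2
  have hkey : ∀ x, U x + c * ∫ z, max (Ψc z - Ψc x) 0 ^ 2 ∂θ ≤ Ψc x₀ := by
    intro x
    have hIle : (∫ z, max (Ψc z - Ψc x) 0 ^ 2 ∂θ)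
        ≤ ((Ψc x₀ - Ψc x) * Ψc x₀) * (θ Set.univ).toReal := by
      apply int_upper θ _ (((Ψc.continuous.sub continuous_const).max continuous_const).pow 2)
      intro z
      have hp1 : max (Ψc z - Ψc x) 0 ≤ Ψc x₀ - Ψc x :=
        max_le (by linarith [hx₀ z]) (by linarith [hx₀ x])
      have hp2 : max (Ψc z - Ψc x) 0 ≤ Ψc x₀ :=
        max_le (by linarith [hx₀ z, h0 x]) (h0 x₀)
      have hp0 : 0 ≤ max (Ψc z - Ψc x) 0 := le_max_right _ _
      show max (Ψc z - Ψc x) 0 ^ 2 ≤ (Ψc x₀ - Ψc x) * Ψc x₀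
      nlinarith
    have hUx : U x ≤ Ψc x := hlow x
    have hxM : Ψc x ≤ Ψc x₀ := hx₀ x
    nlinarith [mul_le_mul_of_nonneg_left hIle hc.le, h2cM, hθ2, hT0, h0 x₀,
      mul_nonneg (mul_nonneg hc.le (sub_nonneg.2 hxM)) (h0 x₀),
      mul_nonneg (mul_nonneg (mul_nonneg hc.le (sub_nonneg.2 hxM)) (h0 x₀)) (sub_nonneg.2 hθ2),
      mul_nonneg (sub_nonneg.2 hxM) (by linarith [h2cM] : (0:ℝ) ≤ 1 - 2 * c * Ψc x₀)]
  have heq : ∀ x, Ψc x = U x + c * ∫ z, max (Ψc z - Ψc x) 0 ^ 2 ∂θ := by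
    intro x
    have h := hfixx x
    rw [min_eq_left ((hkey x).trans (hub x₀))] at h
    exact h.symm
  refine ⟨Ψc, ⟨fun x => ⟨h0 x, hub x⟩, heq⟩, ?_⟩
  rintro g ⟨hgb, hge⟩
  have hd : dist g Ψc ≤ K * dist g Ψc := by
    rw [ContinuousMap.dist_le (mul_nonneg hK0 dist_nonneg)]
    intro x
    rw [Real.dist_eq, hge x, heq x]
    exact hest g Ψc x hgb (fun z => ⟨h0 z, hub z⟩)
  have hdle : dist g Ψc ≤ 0 := by nlinarith [hd, hK1, dist_nonneg (x := g) (y := Ψc)]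
  exact dist_eq_zero.1 (le_antisymm hdle dist_nonneg)
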